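/- Let V be a vector space and let A = T(V) be equipped with the deconcatenation coproduct Δ and a commutative associative product * admitting ∅ as unit, making (T(V),*,Δ) a bialgebra. Then V ∩ (A₊ * A₊) = (0), where A₊ is the augmentation ideal. -/

import Mathlib

set_option linter.unusedSectionVars false

open TensorProduct

namespace Rigid

section Lagrange

variable (K : Type*) [Field K] [CharZero K]

/-- coefficient of `X` in the Lagrange basis polynomial at node `k` for nodes `0, …, M` -/
noncomputable def lagCoeff (M k : ℕ) : K :=
  (Lagrange.basis (Finset.range (M + 1)) (fun i : ℕ => (i : K)) k).coeff 1

theorem coeff_one_eq_sum (M : ℕ) (p : Polynomial K) (hp : p.degree < (M + 1 : ℕ)) :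
    p.coeff 1 = ∑ k ∈ Finset.range (M + 1), p.eval (k : K) * lagCoeff K M k := by
  have hinj : Set.InjOn (fun i : ℕ => (i : K)) (Finset.range (M + 1)) :=
    fun a _ b _ h => Nat.cast_injective h
  have hdeg : p.degree < (Finset.range (M + 1)).card := by
    simpa [Finset.card_range] using hp
  have hintp := Lagrange.eq_interpolate hinj hdeg
  conv_lhs => rw [hintp]
  rw [Lagrange.interpolate_apply, Polynomial.finset_sum_coeff]
  exact Finset.sum_congr rfl fun k _ => by rw [Polynomial.coeff_C_mul]; rfl

/-- the polynomial `X choose i` -/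
noncomputable def chPoly (i : ℕ) : Polynomial K :=
  Polynomial.C (((i.factorial : K))⁻¹) * descPochhammer K i

theorem chPoly_eval (i k : ℕ) : (chPoly K i).eval (k : K) = (k.choose i : K) := by
  rw [chPoly, Polynomial.eval_mul, Polynomial.eval_C, descPochhammer_eval_eq_descFactorial,
    Nat.descFactorial_eq_factorial_mul_choose]
  push_cast
  rw [← mul_assoc, inv_mul_cancel₀ (by exact_mod_cast Nat.factorial_ne_zero i), one_mul]

theorem chPoly_degree_le (i : ℕ) : (chPoly K i).degree ≤ (i : ℕ) := by
  refine le_trans (Polynomial.degree_mul_le _ _) ?_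
  have h1 : (Polynomial.C (((i.factorial : K))⁻¹)).degree ≤ 0 := Polynomial.degree_C_le
  have h2 : (descPochhammer K i).degree ≤ (i : ℕ) := by
    refine le_trans (Polynomial.degree_le_natDegree) ?_
    rw [descPochhammer_natDegree]
  calc (Polynomial.C (((i.factorial : K))⁻¹)).degree + (descPochhammer K i).degree
      ≤ 0 + (i : ℕ) := add_le_add h1 h2
    _ = (i : ℕ) := by rw [zero_add]

theorem chPoly_coeff_zero (i : ℕ) (hi : 1 ≤ i) : (chPoly K i).coeff 0 = 0 := by
  rw [chPoly, Polynomial.coeff_C_mul, Polynomial.coeff_zero_eq_eval_zero,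
    descPochhammer_eval_zero]
  simp [Nat.one_le_iff_ne_zero.mp hi]

theorem lag_sum_id (M : ℕ) (hM : 1 ≤ M) :
    ∑ k ∈ Finset.range (M + 1), (k : K) * lagCoeff K M k = 1 := by
  have hd : (Polynomial.X : Polynomial K).degree < (M + 1 : ℕ) := by
    rw [Polynomial.degree_X]
    exact_mod_cast (by omega : (1 : ℕ) < M + 1)
  have := coeff_one_eq_sum K M Polynomial.X hd
  simpa using this.symm

theorem lag_sum_choose (M i j : ℕ) (hi : 1 ≤ i) (hj : 1 ≤ j) (hij : i + j ≤ M) :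
    ∑ k ∈ Finset.range (M + 1), ((k.choose i : K) * (k.choose j : K)) * lagCoeff K M k = 0 := by
  set p := chPoly K i * chPoly K j with hp
  have hdeg : p.degree < (M + 1 : ℕ) := by
    have h1 : p.degree ≤ ((i : ℕ) : WithBot ℕ) + ((j : ℕ) : WithBot ℕ) :=
      le_trans (Polynomial.degree_mul_le _ _)
        (add_le_add (chPoly_degree_le K i) (chPoly_degree_le K j))
    have h2 : ((i : ℕ) : WithBot ℕ) + ((j : ℕ) : WithBot ℕ) = ((i + j : ℕ) : WithBot ℕ) :=
      (Nat.cast_add i j).symm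
    refine lt_of_le_of_lt (h1.trans_eq h2) ?_
    exact_mod_cast (by omega : i + j < M + 1)
  have hc1 : p.coeff 1 = 0 := by
    rw [hp, Polynomial.coeff_mul]
    rw [Finset.Nat.sum_antidiagonal_eq_sum_range_succ_mk]
    rw [Finset.sum_range_succ, Finset.sum_range_succ, Finset.sum_range_zero]
    simp [chPoly_coeff_zero K i hi, chPoly_coeff_zero K j hj]
  have hsum := coeff_one_eq_sum K M p hdeg
  rw [hc1] at hsum
  have heval : ∀ k : ℕ, p.eval (k : K) = (k.choose i : K) * (k.choose j : K) := fun k => by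
    rw [hp, Polynomial.eval_mul, chPoly_eval, chPoly_eval]
  calc ∑ k ∈ Finset.range (M + 1), ((k.choose i : K) * (k.choose j : K)) * lagCoeff K M k
      = ∑ k ∈ Finset.range (M + 1), p.eval (k : K) * lagCoeff K M k :=
        Finset.sum_congr rfl fun k _ => by rw [heval k]
    _ = 0 := hsum.symm

end Lagrange

structure Setup (K V : Type*) [Field K] [CharZero K] [AddCommGroup V] [Module K V] where
  Δ : TensorAlgebra K V →ₗ[K] TensorAlgebra K V ⊗[K] TensorAlgebra K V
  ε : TensorAlgebra K V →ₗ[K] K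
  star : TensorAlgebra K V →ₗ[K] TensorAlgebra K V →ₗ[K] TensorAlgebra K V
  hΔone : Δ 1 = 1 ⊗ₜ[K] 1
  hΔcons : ∀ (v : V) (u : TensorAlgebra K V),
      Δ (TensorAlgebra.ι K v * u) =
        1 ⊗ₜ[K] (TensorAlgebra.ι K v * u)
        + TensorProduct.map (LinearMap.mulLeft K (TensorAlgebra.ι K v))
            LinearMap.id (Δ u)
  hεone : ε 1 = 1
  hεcons : ∀ (v : V) (u : TensorAlgebra K V), ε (TensorAlgebra.ι K v * u) = 0
  hcomm : ∀ u v : TensorAlgebra K V, star u v = star v u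
  hassoc : ∀ u v w : TensorAlgebra K V, star (star u v) w = star u (star v w)
  hone : ∀ u : TensorAlgebra K V, star 1 u = u
  hΔstar : ∀ u v : TensorAlgebra K V, Δ (star u v) =
      TensorProduct.map (TensorProduct.lift star) (TensorProduct.lift star)
        (TensorProduct.tensorTensorTensorComm K (TensorAlgebra K V)
          (TensorAlgebra K V) (TensorAlgebra K V) (TensorAlgebra K V)
          (Δ u ⊗ₜ[K] Δ v))
  hεstar : ∀ u v : TensorAlgebra K V, ε (star u v) = ε u * ε v

namespace Setup

variable {K V : Type*} [Field K] [CharZero K] [AddCommGroup V] [Module K V]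
  (S : Setup K V)

local notation "A" => TensorAlgebra K V
local notation "ιV" => TensorAlgebra.ι K (M := V)

/-- induction principle: a submodule containing 1 and closed under left mult by `ι v`
is everything. -/
theorem indP (M : Submodule K (TensorAlgebra K V)) (h1 : (1 : A) ∈ M)
    (hmul : ∀ (v : V), ∀ u ∈ M, ιV v * u ∈ M) : M = ⊤ := by
  have key : ∀ a : A, ∀ b ∈ M, a * b ∈ M := by
    intro a
    induction a using TensorAlgebra.induction with
    | algebraMap r => intro b hb; rw [Algebra.algebraMap_eq_smul_one, smul_mul_assoc, one_mul]
                      exact M.smul_mem r hb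
    | ι x => intro b hb; exact hmul x b hb
    | mul a₁ a₂ h₁ h₂ => intro b hb; rw [mul_assoc]; exact h₁ _ (h₂ _ hb)
    | add a₁ a₂ h₁ h₂ => intro b hb; rw [add_mul]; exact M.add_mem (h₁ _ hb) (h₂ _ hb)
  have : ∀ a : A, a ∈ M := fun a => by simpa using key a 1 h1
  exact Submodule.eq_top_iff'.mpr this

theorem ε_ι (v : V) : S.ε (ιV v) = 0 := by
  simpa using S.hεcons v 1

theorem star_one_right (u : A) : S.star u 1 = u := by rw [S.hcomm]; exact S.hone u

/-- multiplication as a linear map on the tensor product -/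
noncomputable def m : (TensorAlgebra K V) ⊗[K] (TensorAlgebra K V) →ₗ[K] TensorAlgebra K V :=
  TensorProduct.lift S.star

@[simp] theorem m_tmul (x y : A) : S.m (x ⊗ₜ[K] y) = S.star x y := rfl

/-- the convolution unit `x ↦ ε x • 1` -/
noncomputable def e : TensorAlgebra K V →ₗ[K] TensorAlgebra K V := S.ε.smulRight 1

@[simp] theorem e_apply (x : A) : S.e x = S.ε x • 1 := rfl

@[simp] theorem e_one : S.e 1 = 1 := by simp [S.hεone]

/-- convolution product of two linear endomorphisms -/
noncomputable def conv (f g : TensorAlgebra K V →ₗ[K] TensorAlgebra K V) :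
    TensorAlgebra K V →ₗ[K] TensorAlgebra K V :=
  S.m ∘ₗ (TensorProduct.map f g) ∘ₗ S.Δ

theorem conv_add_right (f g h : A →ₗ[K] A) :
    S.conv f (g + h) = S.conv f g + S.conv f h := by
  simp [conv, TensorProduct.map_add_right, LinearMap.comp_add, LinearMap.add_comp]

theorem conv_add_left (f g h : A →ₗ[K] A) :
    S.conv (f + g) h = S.conv f h + S.conv g h := by
  simp [conv, TensorProduct.map_add_left, LinearMap.comp_add, LinearMap.add_comp]

theorem conv_smul_right (c : K) (f g : A →ₗ[K] A) :
    S.conv f (c • g) = c • S.conv f g := by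
  simp [conv, TensorProduct.map_smul_right, LinearMap.comp_smul, LinearMap.smul_comp]

/-- `x ⊗ y ↦ ε x • y` -/
noncomputable def εL : (TensorAlgebra K V) ⊗[K] (TensorAlgebra K V) →ₗ[K] TensorAlgebra K V :=
  TensorProduct.lift ((LinearMap.lsmul K (TensorAlgebra K V)) ∘ₗ S.ε)

@[simp] theorem εL_tmul (x y : A) : S.εL (x ⊗ₜ[K] y) = S.ε x • y := rfl

/-- `x ⊗ y ↦ ε y • x` -/
noncomputable def εR : (TensorAlgebra K V) ⊗[K] (TensorAlgebra K V) →ₗ[K] TensorAlgebra K V :=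
  TensorProduct.lift ((LinearMap.lsmul K (TensorAlgebra K V)) ∘ₗ S.ε).flip

@[simp] theorem εR_tmul (x y : A) : S.εR (x ⊗ₜ[K] y) = S.ε y • x := rfl

theorem counit_left (x : A) : S.εL (S.Δ x) = x := by
  have := indP (LinearMap.eqLocus (S.εL ∘ₗ S.Δ) LinearMap.id) ?_ ?_
  · have hx : x ∈ LinearMap.eqLocus (S.εL ∘ₗ S.Δ) LinearMap.id := this ▸ Submodule.mem_top
    exact hx
  · show S.εL (S.Δ 1) = 1
    rw [S.hΔone]; simp [S.hεone]
  · intro v u _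
    show S.εL (S.Δ (ιV v * u)) = ιV v * u
    have h2 : S.εL ∘ₗ TensorProduct.map (LinearMap.mulLeft K (ιV v)) LinearMap.id = 0 := by
      apply TensorProduct.ext'
      intro a b
      simp [S.hεcons v a]
    rw [S.hΔcons v u, map_add, ← LinearMap.comp_apply S.εL, h2]
    simp [S.hεone]

theorem counit_right (x : A) : S.εR (S.Δ x) = x := by
  have := indP (LinearMap.eqLocus (S.εR ∘ₗ S.Δ) LinearMap.id) ?_ ?_
  · have hx : x ∈ LinearMap.eqLocus (S.εR ∘ₗ S.Δ) LinearMap.id := this ▸ Submodule.mem_top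
    exact hx
  · show S.εR (S.Δ 1) = 1
    rw [S.hΔone]; simp [S.hεone]
  · intro v u hu
    have hu' : S.εR (S.Δ u) = u := hu
    show S.εR (S.Δ (ιV v * u)) = ιV v * u
    have h2 : S.εR ∘ₗ TensorProduct.map (LinearMap.mulLeft K (ιV v)) LinearMap.id
        = (LinearMap.mulLeft K (ιV v)) ∘ₗ S.εR := by
      apply TensorProduct.ext'
      intro a b
      simp [mul_smul_comm]
    rw [S.hΔcons v u, map_add, ← LinearMap.comp_apply S.εR, h2]
    simp [S.hεcons v u, LinearMap.comp_apply, hu']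

theorem conv_e_left (f : A →ₗ[K] A) : S.conv S.e f = f := by
  ext x
  have h : S.m ∘ₗ TensorProduct.map S.e f = f ∘ₗ S.εL := by
    apply TensorProduct.ext'
    intro a b
    simp [S.hone, map_smul]
  show S.m (TensorProduct.map S.e f (S.Δ x)) = f x
  rw [← LinearMap.comp_apply S.m, h, LinearMap.comp_apply, S.counit_left]

theorem conv_e_right (f : A →ₗ[K] A) : S.conv f S.e = f := by
  ext x
  have h : S.m ∘ₗ TensorProduct.map f S.e = f ∘ₗ S.εR := by
    apply TensorProduct.ext'
    intro a b
    simp [S.star_one_right, map_smul]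
  show S.m (TensorProduct.map f S.e (S.Δ x)) = f x
  rw [← LinearMap.comp_apply S.m, h, LinearMap.comp_apply, S.counit_right]

/-- the augmentation projection `x ↦ x - ε x • 1` -/
noncomputable def ρ : TensorAlgebra K V →ₗ[K] TensorAlgebra K V := LinearMap.id - S.e

@[simp] theorem ρ_apply (x : A) : S.ρ x = x - S.ε x • 1 := rfl

@[simp] theorem ρ_one : S.ρ 1 = 0 := by simp [S.hεone]

theorem ρ_mulLeft (v : V) (w : A) : S.ρ (ιV v * w) = ιV v * w := by
  simp [S.hεcons v w]

theorem ρ_of_ker (x : A) (hx : S.ε x = 0) : S.ρ x = x := by simp [hx]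

/-- convolution powers of `ρ` -/
noncomputable def ρpow (n : ℕ) : TensorAlgebra K V →ₗ[K] TensorAlgebra K V :=
  Nat.rec S.e (fun _ f => S.conv S.ρ f) n

@[simp] theorem ρpow_zero : S.ρpow 0 = S.e := rfl

theorem ρpow_succ (n : ℕ) : S.ρpow (n + 1) = S.conv S.ρ (S.ρpow n) := rfl

theorem ρpow_one : S.ρpow 1 = S.ρ := by
  rw [ρpow_succ, ρpow_zero, S.conv_e_right]

theorem ρpow_succ_apply (n : ℕ) (x : A) :
    S.ρpow (n + 1) x = S.m (TensorProduct.map S.ρ (S.ρpow n) (S.Δ x)) := rfl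

theorem ρpow_apply_one (n : ℕ) : S.ρpow (n + 1) (1 : A) = 0 := by
  rw [ρpow_succ_apply, S.hΔone]
  simp [S.hεone]

theorem Δ_ι (v : V) : S.Δ (ιV v) = 1 ⊗ₜ[K] (ιV v) + (ιV v) ⊗ₜ[K] 1 := by
  have := S.hΔcons v 1
  rw [mul_one] at this
  rw [this, S.hΔone]
  simp

theorem ρpow_apply_ι (n : ℕ) (v : V) : S.ρpow (n + 2) (ιV v) = 0 := by
  rw [ρpow_succ_apply, S.Δ_ι]
  simp [S.ρpow_apply_one, S.hεone]

theorem ρpow_one_apply_ι (v : V) : S.ρpow 1 (ιV v) = ιV v := by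
  rw [S.ρpow_one]; exact S.ρ_of_ker _ (S.ε_ι v)

/-- the length filtration -/
noncomputable def Wfil : ℕ → Submodule K (TensorAlgebra K V)
  | 0 => Submodule.span K {1}
  | n + 1 => Wfil n ⊔ Submodule.span K {x | ∃ v : V, ∃ u ∈ Wfil n, x = ιV v * u}

theorem Wfil_zero : Wfil (K := K) (V := V) 0 = Submodule.span K {1} := rfl

theorem Wfil_succ (n : ℕ) : Wfil (K := K) (V := V) (n + 1)
    = Wfil n ⊔ Submodule.span K {x | ∃ v : V, ∃ u ∈ Wfil (K := K) (V := V) n, x = ιV v * u} :=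
  rfl

theorem Wfil_mono : Monotone (Wfil (K := K) (V := V)) := by
  apply monotone_nat_of_le_succ
  intro n
  rw [Wfil_succ]
  exact le_sup_left

/-- the union of the filtration submodules, as a submodule -/
noncomputable def Wsup : Submodule K (TensorAlgebra K V) where
  carrier := {x | ∃ n, x ∈ Wfil (K := K) (V := V) n}
  add_mem' := by
    rintro a b ⟨n, hn⟩ ⟨m, hm⟩
    exact ⟨max n m, Submodule.add_mem _ (Wfil_mono (le_max_left n m) hn)
      (Wfil_mono (le_max_right n m) hm)⟩
  zero_mem' := ⟨0, Submodule.zero_mem _⟩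
  smul_mem' := by
    rintro c a ⟨n, hn⟩
    exact ⟨n, Submodule.smul_mem _ c hn⟩

theorem exists_mem_Wfil (x : A) : ∃ n, x ∈ Wfil (K := K) (V := V) n := by
  have h : Wsup (K := K) (V := V) = ⊤ := by
    apply indP
    · exact ⟨0, by rw [Wfil_zero]; exact Submodule.mem_span_singleton_self 1⟩
    · rintro v u ⟨n, hn⟩
      exact ⟨n + 1, by rw [Wfil_succ]; exact Submodule.mem_sup_right (Submodule.subset_span ⟨v, u, hn, rfl⟩)⟩
  have : x ∈ Wsup (K := K) (V := V) := h ▸ Submodule.mem_top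
  exact this

theorem van (n : ℕ) : ∀ x ∈ Wfil (K := K) (V := V) n, ∀ s, n < s →
    TensorProduct.map LinearMap.id (S.ρpow s) (S.Δ x) = 0 := by
  induction n with
  | zero =>
    intro x hx s hs
    rw [Wfil_zero, Submodule.mem_span_singleton] at hx
    obtain ⟨c, rfl⟩ := hx
    obtain ⟨t, rfl⟩ : ∃ t, s = t + 1 := ⟨s - 1, by omega⟩
    rw [map_smul, map_smul, S.hΔone]
    simp [S.ρpow_apply_one]
  | succ n ih =>
    have hpt : ∀ (v : V), ∀ u ∈ Wfil (K := K) (V := V) n, ∀ t, n < t →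
        S.ρpow (t + 1) (ιV v * u) = 0 := by
      intro v u hu t ht
      rw [ρpow_succ_apply, S.hΔcons v u, map_add]
      have e1 : TensorProduct.map S.ρ (S.ρpow t) (1 ⊗ₜ[K] (ιV v * u)) = 0 := by
        simp [S.hεone]
      have hcompose : TensorProduct.map S.ρ (S.ρpow t) ∘ₗ
          TensorProduct.map (LinearMap.mulLeft K (ιV v)) LinearMap.id
          = (TensorProduct.map (LinearMap.mulLeft K (ιV v)) LinearMap.id) ∘ₗ
            TensorProduct.map LinearMap.id (S.ρpow t) := by
        rw [← TensorProduct.map_comp, ← TensorProduct.map_comp]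
        congr 1
        · ext w
          exact S.ρ_mulLeft v w
      rw [e1, ← LinearMap.comp_apply (TensorProduct.map S.ρ (S.ρpow t)), hcompose]
      rw [LinearMap.comp_apply, ih u hu t ht]
      simp
    intro x hx s hs
    have hker : Wfil (K := K) (V := V) (n + 1) ≤
        LinearMap.ker ((TensorProduct.map LinearMap.id (S.ρpow s)) ∘ₗ S.Δ) := by
      rw [Wfil_succ]
      apply sup_le
      · intro y hy
        exact ih y hy s (by omega)
      · rw [Submodule.span_le]
        rintro y ⟨v, u, hu, rfl⟩
        show TensorProduct.map LinearMap.id (S.ρpow s) (S.Δ (ιV v * u)) = 0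
        obtain ⟨t, rfl⟩ : ∃ t, s = t + 1 := ⟨s - 1, by omega⟩
        rw [S.hΔcons v u, map_add]
        have h0 : S.ρpow (t + 1) (ιV v * u) = 0 := hpt v u hu t (by omega)
        have e1 : TensorProduct.map (LinearMap.id : TensorAlgebra K V →ₗ[K] TensorAlgebra K V)
            (S.ρpow (t + 1)) ((1 : TensorAlgebra K V) ⊗ₜ[K] (ιV v * u)) = 0 := by
          simp [h0]
        rw [e1]
        have hcompose : TensorProduct.map LinearMap.id (S.ρpow (t + 1)) ∘ₗ
            TensorProduct.map (LinearMap.mulLeft K (ιV v)) LinearMap.id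
            = (TensorProduct.map (LinearMap.mulLeft K (ιV v)) LinearMap.id) ∘ₗ
              TensorProduct.map LinearMap.id (S.ρpow (t + 1)) := by
          rw [← TensorProduct.map_comp, ← TensorProduct.map_comp]
          simp
        rw [← LinearMap.comp_apply (TensorProduct.map LinearMap.id _), hcompose,
          LinearMap.comp_apply, ih u hu (t + 1) (by omega)]
        simp
    exact hker hx

/-- local conilpotence of `ρ` -/
theorem nilpotence (x : A) : ∃ B, ∀ s, B < s → S.ρpow s x = 0 := by
  obtain ⟨n, hn⟩ := exists_mem_Wfil (K := K) (V := V) x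
  refine ⟨n + 1, fun s hs => ?_⟩
  obtain ⟨t, rfl⟩ : ∃ t, s = t + 1 := ⟨s - 1, by omega⟩
  have h1 : TensorProduct.map LinearMap.id (S.ρpow t) (S.Δ x) = 0 :=
    S.van n x hn t (by omega)
  rw [ρpow_succ_apply]
  have hcomp : TensorProduct.map S.ρ (S.ρpow t)
      = TensorProduct.map S.ρ LinearMap.id ∘ₗ
        TensorProduct.map LinearMap.id (S.ρpow t) := by
    rw [← TensorProduct.map_comp]; simp
  rw [hcomp, LinearMap.comp_apply, h1]
  simp

/-- `Φ f g : x ⊗ y ↦ (f x) ⋆ (g y)` -/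
noncomputable def Φ (f g : TensorAlgebra K V →ₗ[K] TensorAlgebra K V) :
    (TensorAlgebra K V) ⊗[K] (TensorAlgebra K V) →ₗ[K] TensorAlgebra K V :=
  S.m ∘ₗ TensorProduct.map f g

@[simp] theorem Φ_tmul (f g : A →ₗ[K] A) (x y : A) :
    S.Φ f g (x ⊗ₜ[K] y) = S.star (f x) (g y) := rfl

theorem Φ_id_id : S.Φ LinearMap.id LinearMap.id = S.m := by
  apply TensorProduct.ext'
  intro x y
  rfl

/-- coproduct on `A ⊗ A` -/
noncomputable def Δ₂ : (TensorAlgebra K V) ⊗[K] (TensorAlgebra K V) →ₗ[K]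
    ((TensorAlgebra K V) ⊗[K] (TensorAlgebra K V)) ⊗[K]
      ((TensorAlgebra K V) ⊗[K] (TensorAlgebra K V)) :=
  (TensorProduct.tensorTensorTensorComm K (TensorAlgebra K V) (TensorAlgebra K V)
      (TensorAlgebra K V) (TensorAlgebra K V)).toLinearMap ∘ₗ
    TensorProduct.map S.Δ S.Δ

/-- convolution on maps `A ⊗ A → A` -/
noncomputable def convD (F G : (TensorAlgebra K V) ⊗[K] (TensorAlgebra K V) →ₗ[K]
    TensorAlgebra K V) :
    (TensorAlgebra K V) ⊗[K] (TensorAlgebra K V) →ₗ[K] TensorAlgebra K V :=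
  S.m ∘ₗ TensorProduct.map F G ∘ₗ S.Δ₂

theorem Δ_comp_m : S.Δ ∘ₗ S.m = (TensorProduct.map S.m S.m) ∘ₗ S.Δ₂ := by
  apply TensorProduct.ext'
  intro u v
  simpa [Δ₂, m] using S.hΔstar u v

theorem midFour (p q r s : A) :
    S.star (S.star p q) (S.star r s) = S.star (S.star p r) (S.star q s) := by
  rw [S.hassoc p q (S.star r s), ← S.hassoc q r s, S.hcomm q r, S.hassoc r q s,
    ← S.hassoc p r (S.star q s)]

theorem convD_Φ (f g f' g' : A →ₗ[K] A) :
    S.convD (S.Φ f g) (S.Φ f' g') = S.Φ (S.conv f f') (S.conv g g') := by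
  apply TensorProduct.ext'
  intro x y
  show S.m (TensorProduct.map (S.Φ f g) (S.Φ f' g')
      ((TensorProduct.tensorTensorTensorComm K A A A A) (S.Δ x ⊗ₜ[K] S.Δ y)))
    = S.star (S.m (TensorProduct.map f f' (S.Δ x))) (S.m (TensorProduct.map g g' (S.Δ y)))
  generalize S.Δ x = X
  generalize S.Δ y = Y
  induction X using TensorProduct.induction_on with
  | zero =>
    rw [TensorProduct.zero_tmul, LinearEquiv.map_zero, LinearMap.map_zero, LinearMap.map_zero,
      LinearMap.map_zero, LinearMap.map_zero]
    simp [LinearMap.map_zero₂]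
  | tmul x₁ x₂ =>
    induction Y using TensorProduct.induction_on with
    | zero =>
      rw [TensorProduct.tmul_zero, LinearEquiv.map_zero, LinearMap.map_zero, LinearMap.map_zero,
        LinearMap.map_zero, LinearMap.map_zero, LinearMap.map_zero]
    | tmul y₁ y₂ =>
      rw [TensorProduct.tensorTensorTensorComm_tmul]
      simp [S.midFour]
    | add Y₁ Y₂ ih₁ ih₂ =>
      rw [TensorProduct.tmul_add, LinearEquiv.map_add, LinearMap.map_add, LinearMap.map_add,
        ih₁, ih₂, LinearMap.map_add, LinearMap.map_add, LinearMap.map_add]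
  | add X₁ X₂ ih₁ ih₂ =>
    rw [TensorProduct.add_tmul, LinearEquiv.map_add, LinearMap.map_add, LinearMap.map_add,
      ih₁, ih₂, LinearMap.map_add, LinearMap.map_add, LinearMap.map_add₂]

theorem conv_comp_m (f g : A →ₗ[K] A) :
    (S.conv f g) ∘ₗ S.m = S.convD (f ∘ₗ S.m) (g ∘ₗ S.m) := by
  apply TensorProduct.ext'
  intro x y
  have h := congrArg (fun F => F (x ⊗ₜ[K] y)) S.Δ_comp_m
  simp only [LinearMap.comp_apply] at h
  show S.m (TensorProduct.map f g (S.Δ (S.m (x ⊗ₜ[K] y))))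
    = S.m (TensorProduct.map (f ∘ₗ S.m) (g ∘ₗ S.m) (S.Δ₂ (x ⊗ₜ[K] y)))
  rw [h, ← LinearMap.comp_apply (TensorProduct.map f g), ← TensorProduct.map_comp]

/-- convolution powers of the identity -/
noncomputable def Ψpow (k : ℕ) : TensorAlgebra K V →ₗ[K] TensorAlgebra K V :=
  Nat.rec S.e (fun _ f => S.conv LinearMap.id f) k

@[simp] theorem Ψpow_zero : S.Ψpow 0 = S.e := rfl

theorem Ψpow_succ (k : ℕ) : S.Ψpow (k + 1) = S.conv LinearMap.id (S.Ψpow k) := rfl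

theorem e_comp_m : S.e ∘ₗ S.m = S.Φ S.e S.e := by
  apply TensorProduct.ext'
  intro x y
  show S.ε (S.star x y) • 1 = S.star (S.ε x • 1) (S.ε y • 1)
  rw [S.hεstar]
  have h1 : S.star (S.ε x • 1) (S.ε y • 1)
      = S.ε x • S.ε y • S.star (1 : TensorAlgebra K V) 1 := by
    rw [LinearMap.map_smul₂, map_smul]
  rw [h1, S.hone, smul_smul]

theorem Ψpow_comp_m (k : ℕ) : (S.Ψpow k) ∘ₗ S.m = S.Φ (S.Ψpow k) (S.Ψpow k) := by
  induction k with
  | zero => simpa using S.e_comp_m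
  | succ k ih =>
    have : (S.Ψpow (k + 1)) ∘ₗ S.m = S.convD (LinearMap.id ∘ₗ S.m) ((S.Ψpow k) ∘ₗ S.m) := by
      rw [Ψpow_succ, S.conv_comp_m]
    rw [this, LinearMap.id_comp, ih, ← S.Φ_id_id, S.convD_Φ, Ψpow_succ]

theorem Ψpow_star (k : ℕ) (a b : A) :
    S.Ψpow k (S.star a b) = S.star (S.Ψpow k a) (S.Ψpow k b) := by
  have := congrArg (fun F => F (a ⊗ₜ[K] b)) (S.Ψpow_comp_m k)
  simpa using this

/-- convolution with a fixed left factor, as a linear map -/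
noncomputable def convR (f : TensorAlgebra K V →ₗ[K] TensorAlgebra K V) :
    (TensorAlgebra K V →ₗ[K] TensorAlgebra K V) →ₗ[K]
      (TensorAlgebra K V →ₗ[K] TensorAlgebra K V) where
  toFun := S.conv f
  map_add' := S.conv_add_right f
  map_smul' := fun c g => S.conv_smul_right c f g

@[simp] theorem convR_apply (f g : A →ₗ[K] A) : S.convR f g = S.conv f g := rfl

theorem Ψpow_eq_sum (k : ℕ) :
    S.Ψpow k = ∑ s ∈ Finset.range (k + 1), ((k.choose s : K)) • S.ρpow s := by
  induction k with
  | zero => simp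
  | succ k ih =>
    have hid : (LinearMap.id : A →ₗ[K] A) = S.e + S.ρ := by
      simp [ρ]
    rw [Ψpow_succ, hid, S.conv_add_left, S.conv_e_left, ih]
    have h2 : S.conv S.ρ (∑ s ∈ Finset.range (k + 1), ((k.choose s : K)) • S.ρpow s)
        = ∑ s ∈ Finset.range (k + 1), ((k.choose s : K)) • S.ρpow (s + 1) := by
      have := map_sum (S.convR S.ρ) (fun s => ((k.choose s : K)) • S.ρpow s)
        (Finset.range (k + 1))
      simp only [map_smul, convR_apply] at this
      rw [this]
      exact Finset.sum_congr rfl fun s _ => by rw [← S.ρpow_succ]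
    rw [h2]
    -- now Pascal
    have lhs1 : ∑ s ∈ Finset.range (k + 1), ((k.choose s : K)) • S.ρpow s
        = S.ρpow 0 + ∑ s ∈ Finset.range (k + 1), ((k.choose (s + 1) : K)) • S.ρpow (s + 1) := by
      rw [Finset.sum_range_succ', Nat.choose_zero_right]
      rw [Finset.sum_range_succ, Nat.choose_succ_self]
      simp [add_comm]
    have rhs : ∑ s ∈ Finset.range (k + 2), (((k + 1).choose s : K)) • S.ρpow s
        = S.ρpow 0 + ∑ s ∈ Finset.range (k + 1), (((k + 1).choose (s + 1) : K)) • S.ρpow (s + 1) := by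
      rw [Finset.sum_range_succ', Nat.choose_zero_right]
      simp [add_comm]
    rw [lhs1, rhs, add_assoc, ← Finset.sum_add_distrib]
    congr 1
    apply Finset.sum_congr rfl
    intro s _
    rw [← add_smul]
    congr 1
    rw [Nat.choose_succ_succ' k s]
    push_cast
    ring

theorem Ψpow_apply_ι (k : ℕ) (v : V) : S.Ψpow k (ιV v) = (k : K) • ιV v := by
  rw [S.Ψpow_eq_sum]
  rcases Nat.eq_zero_or_pos k with hk | hk
  · subst hk
    simp [S.ε_ι v]
  · rw [LinearMap.sum_apply]
    rw [Finset.sum_eq_single 1]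
    · simp [S.ρpow_one_apply_ι, Nat.choose_one_right]
    · intro s hs hne
      match s, hne with
      | 0, _ => simp [S.ε_ι v]
      | (t+2), _ => simp [S.ρpow_apply_ι]
    · intro h
      exact absurd (Finset.mem_range.mpr (by omega)) h

/-- the quasi-idempotent built from Lagrange coefficients -/
noncomputable def Ψ (M : ℕ) : TensorAlgebra K V →ₗ[K] TensorAlgebra K V :=
  ∑ k ∈ Finset.range (M + 1), lagCoeff K M k • S.Ψpow k

theorem Ψ_apply_ι (M : ℕ) (hM : 1 ≤ M) (v : V) : S.Ψ M (ιV v) = ιV v := by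
  rw [Ψ, LinearMap.sum_apply]
  have h : ∀ k ∈ Finset.range (M + 1),
      (lagCoeff K M k • S.Ψpow k) (ιV v) = ((k : K) * lagCoeff K M k) • ιV v := fun k _ => by
    rw [LinearMap.smul_apply, S.Ψpow_apply_ι, smul_smul, mul_comm]
  rw [Finset.sum_congr rfl h, ← Finset.sum_smul, lag_sum_id K M hM, one_smul]

theorem Ψ_star_zero (a b : A) (ha : S.ε a = 0) (hb : S.ε b = 0) (Ba Bb : ℕ)
    (hBa : ∀ s, Ba < s → S.ρpow s a = 0) (hBb : ∀ t, Bb < t → S.ρpow t b = 0)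
    (M : ℕ) (hM : Ba + Bb ≤ M) : S.Ψ M (S.star a b) = 0 := by
  have expand : ∀ k ∈ Finset.range (M + 1), S.Ψpow k (S.star a b)
      = ∑ s ∈ Finset.range (M + 1), ∑ t ∈ Finset.range (M + 1),
          ((k.choose s : K) * (k.choose t : K)) • S.star (S.ρpow s a) (S.ρpow t b) := by
    intro k hk
    have hk' : k + 1 ≤ M + 1 := by
      simp only [Finset.mem_range] at hk; omega
    have key : ∀ c : A, S.Ψpow k c = ∑ s ∈ Finset.range (M + 1), (k.choose s : K) • S.ρpow s c := by
      intro c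
      have h1 : S.Ψpow k c = ∑ s ∈ Finset.range (k + 1), (k.choose s : K) • S.ρpow s c := by
        rw [S.Ψpow_eq_sum]; simp [LinearMap.sum_apply]
      rw [h1]
      refine Finset.sum_subset (Finset.range_subset_range.mpr hk') fun x hx hnx => ?_
      have hlt : k < x := by
        simp only [Finset.mem_range] at hx hnx; omega
      rw [Nat.choose_eq_zero_of_lt hlt]
      simp
    rw [S.Ψpow_star, key a, key b]
    simp only [map_sum, map_smul, LinearMap.sum_apply, LinearMap.smul_apply, Finset.smul_sum,
      smul_smul]
    rw [Finset.sum_comm]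
    exact Finset.sum_congr rfl fun s _ => Finset.sum_congr rfl fun t _ => by rw [mul_comm]
  have step1 : S.Ψ M (S.star a b)
      = ∑ k ∈ Finset.range (M + 1), ∑ s ∈ Finset.range (M + 1), ∑ t ∈ Finset.range (M + 1),
          ((k.choose s : K) * (k.choose t : K) * lagCoeff K M k) •
            S.star (S.ρpow s a) (S.ρpow t b) := by
    rw [Ψ, LinearMap.sum_apply]
    refine Finset.sum_congr rfl fun k hk => ?_
    rw [LinearMap.smul_apply, expand k hk, Finset.smul_sum]
    refine Finset.sum_congr rfl fun s _ => ?_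
    rw [Finset.smul_sum]
    refine Finset.sum_congr rfl fun t _ => ?_
    rw [smul_smul, mul_comm]
  rw [step1, Finset.sum_comm]
  refine Finset.sum_eq_zero fun s hs => ?_
  rw [Finset.sum_comm]
  refine Finset.sum_eq_zero fun t ht => ?_
  rw [← Finset.sum_smul]
  rcases Nat.eq_zero_or_pos s with hs0 | hs1
  · subst hs0
    have h0 : S.ρpow 0 a = 0 := by simp [ha]
    rw [h0]
    simp [LinearMap.map_zero₂]
  rcases Nat.eq_zero_or_pos t with ht0 | ht1
  · subst ht0
    have h0 : S.ρpow 0 b = 0 := by simp [hb]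
    rw [h0]
    simp
  by_cases hsa : Ba < s
  · rw [hBa s hsa]
    simp [LinearMap.map_zero₂]
  by_cases htb : Bb < t
  · rw [hBb t htb]
    simp
  · rw [lag_sum_choose K M s t hs1 ht1 (by omega), zero_smul]

theorem main : LinearMap.range (TensorAlgebra.ι K (M := V)) ⊓
      Submodule.span K
        (Set.image2 (fun p q => S.star p q)
          (↑(LinearMap.ker S.ε) : Set (TensorAlgebra K V))
          (↑(LinearMap.ker S.ε) : Set (TensorAlgebra K V))) = ⊥ := by
  rw [eq_bot_iff]
  rintro x ⟨hx1, hx2⟩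
  obtain ⟨v, rfl⟩ := hx1
  suffices h : ιV v = 0 by simp [h]
  let P : Submodule K (TensorAlgebra K V) :=
    { carrier := {x | ∃ M₀, ∀ M, M₀ ≤ M → S.Ψ M x = 0}
      add_mem' := by
        rintro y z ⟨My, hy⟩ ⟨Mz, hz⟩
        exact ⟨max My Mz, fun M hMle => by
          rw [map_add, hy M (le_trans (le_max_left _ _) hMle),
            hz M (le_trans (le_max_right _ _) hMle), add_zero]⟩
      zero_mem' := ⟨0, fun M _ => map_zero _⟩
      smul_mem' := by
        rintro c y ⟨My, hy⟩
        exact ⟨My, fun M hMle => by rw [map_smul, hy M hMle, smul_zero]⟩ }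
  have hspan : Submodule.span K
      (Set.image2 (fun p q => S.star p q)
        (↑(LinearMap.ker S.ε) : Set (TensorAlgebra K V))
        (↑(LinearMap.ker S.ε) : Set (TensorAlgebra K V))) ≤ P := by
    rw [Submodule.span_le]
    rintro z ⟨p, hp, q, hq, rfl⟩
    obtain ⟨Ba, hBa⟩ := S.nilpotence p
    obtain ⟨Bb, hBb⟩ := S.nilpotence q
    exact ⟨Ba + Bb, fun M hMle =>
      S.Ψ_star_zero p q (LinearMap.mem_ker.mp hp) (LinearMap.mem_ker.mp hq)
        Ba Bb hBa hBb M hMle⟩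
  obtain ⟨M₀, hM₀⟩ := hspan hx2
  have h1 : S.Ψ (max M₀ 1) (ιV v) = 0 := hM₀ _ (le_max_left _ _)
  rwa [S.Ψ_apply_ι _ (le_max_right _ _) v] at h1

end Setup


end Rigid

/-- If `T(V)`, equipped with the deconcatenation coproduct `Δ`, carries a
commutative associative product `*` with unit the empty word making it a
bialgebra, then `V ∩ (A₊ * A₊) = (0)` where `A₊` is the augmentation ideal. -/
theorem primitive_inter_square_eq_bot {K V : Type*} [Field K] [CharZero K]
    [AddCommGroup V] [Module K V]
    (Δ : TensorAlgebra K V →ₗ[K] TensorAlgebra K V ⊗[K] TensorAlgebra K V)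
    (hΔone : Δ 1 = 1 ⊗ₜ[K] 1)
    (hΔcons : ∀ (v : V) (u : TensorAlgebra K V),
      Δ (TensorAlgebra.ι K v * u) =
        1 ⊗ₜ[K] (TensorAlgebra.ι K v * u)
        + TensorProduct.map (LinearMap.mulLeft K (TensorAlgebra.ι K v))
            LinearMap.id (Δ u))
    (ε : TensorAlgebra K V →ₗ[K] K)
    (hεone : ε 1 = 1)
    (hεcons : ∀ (v : V) (u : TensorAlgebra K V), ε (TensorAlgebra.ι K v * u) = 0)
    (star : TensorAlgebra K V →ₗ[K] TensorAlgebra K V →ₗ[K] TensorAlgebra K V)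
    (hcomm : ∀ u v : TensorAlgebra K V, star u v = star v u)
    (hassoc : ∀ u v w : TensorAlgebra K V, star (star u v) w = star u (star v w))
    (hone : ∀ u : TensorAlgebra K V, star 1 u = u)
    (hΔstar : ∀ u v : TensorAlgebra K V, Δ (star u v) =
      TensorProduct.map (TensorProduct.lift star) (TensorProduct.lift star)
        (TensorProduct.tensorTensorTensorComm K (TensorAlgebra K V)
          (TensorAlgebra K V) (TensorAlgebra K V) (TensorAlgebra K V)
          (Δ u ⊗ₜ[K] Δ v)))
    (hεstar : ∀ u v : TensorAlgebra K V, ε (star u v) = ε u * ε v) :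
    LinearMap.range (TensorAlgebra.ι K (M := V)) ⊓
      Submodule.span K
        (Set.image2 (fun p q => star p q)
          (↑(LinearMap.ker ε) : Set (TensorAlgebra K V))
          (↑(LinearMap.ker ε) : Set (TensorAlgebra K V))) = ⊥ :=
  Rigid.Setup.main
    ⟨Δ, ε, star, hΔone, hΔcons, hεone, hεcons, hcomm, hassoc, hone, hΔstar, hεstar⟩
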